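/- If m is odd, then −2 M^{-1} N + (M^{-1} N)² = 0, where N is the m×m matrix with (0,0)-entry 1 and other entries 0. -/

import Mathlib

open Matrix

/-- α_j = 1/(8j²−2). -/
noncomputable def alph (j : ℕ) : ℝ := 1 / (8 * (j : ℝ) ^ 2 - 2)

/-- The m×m tridiagonal matrix M with M₀₀ = 1/2, M_{j-1,j} = −α_j, M_{j,j-1} = α_j. -/
noncomputable def Mmat (m : ℕ) : Matrix (Fin m) (Fin m) ℝ :=
  Matrix.of fun i j =>
    if (i : ℕ) = 0 ∧ (j : ℕ) = 0 then 1 / 2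
    else if (i : ℕ) + 1 = (j : ℕ) then - alph (j : ℕ)
    else if (j : ℕ) + 1 = (i : ℕ) then alph (i : ℕ)
    else 0

/-- The m×m matrix N = e₀ e₀ᵀ. -/
noncomputable def Nmat (m : ℕ) : Matrix (Fin m) (Fin m) ℝ :=
  Matrix.of fun i j => if (i : ℕ) = 0 ∧ (j : ℕ) = 0 then 1 else 0

/-- The vector v: v_j = 2(2j+1) for even j (0 else) when m is odd;
    v_j = −2(2j+1) for odd j (0 else) when m is even. -/
noncomputable def vVec (m : ℕ) : Fin m → ℝ := fun j =>
  if Odd m then (if Even (j : ℕ) then 2 * (2 * (j : ℝ) + 1) else 0)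
  else (if Odd (j : ℕ) then -2 * (2 * (j : ℝ) + 1) else 0)

/-- The standard basis vector e₀. -/
noncomputable def e0vec (m : ℕ) : Fin m → ℝ := fun i => if (i : ℕ) = 0 then 1 else 0

lemma sum_two {m : ℕ} (f : Fin m → ℝ) (a b : Fin m) (hab : a ≠ b)
    (h : ∀ c, c ≠ a → c ≠ b → f c = 0) : ∑ c, f c = f a + f b := by
  rw [← Finset.sum_pair hab]
  exact (Finset.sum_subset (Finset.subset_univ _) (by
    intro c _ hc
    simp only [Finset.mem_insert, Finset.mem_singleton, not_or] at hc
    exact h c hc.1 hc.2)).symm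

lemma key (m : ℕ) (hm : 1 ≤ m) (hodd : Odd m) :
    Mmat m *ᵥ vVec m = e0vec m := by
  funext i
  have hz : (0 : ℕ) < m := hm
  rw [Matrix.mulVec, dotProduct]
  rcases Nat.even_or_odd (i : ℕ) with hie | hio
  · -- i even
    rcases Nat.eq_zero_or_pos (i : ℕ) with hi0 | hip
    · -- i = 0
      rw [Finset.sum_eq_single (⟨0, hz⟩ : Fin m)]
      · norm_num [Mmat, vVec, e0vec, hi0, hodd]
      · intro b _ hb
        have hbv : (b : ℕ) ≠ 0 := fun h => hb (Fin.ext (by simp [h]))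
        rcases Nat.even_or_odd (b : ℕ) with hbe | hbo
        · obtain ⟨k, hk⟩ := hbe
          have h0 : ¬((i:ℕ) = 0 ∧ (b:ℕ) = 0) := by omega
          have h1 : ¬((i:ℕ) + 1 = (b:ℕ)) := by omega
          have h2 : ¬((b:ℕ) + 1 = (i:ℕ)) := by omega
          simp [Mmat, h0, h1, h2]
        · have : vVec m b = 0 := by
            simp [vVec, hodd, Nat.not_even_iff_odd.mpr hbo]
          rw [this, mul_zero]
      · simp
    · -- i even positive
      have he0 : e0vec m i = 0 := by
        simp only [e0vec]; rw [if_neg (by omega)]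
      rw [he0]
      apply Finset.sum_eq_zero
      intro b _
      rcases Nat.even_or_odd (b : ℕ) with hbe | hbo
      · obtain ⟨k, hk⟩ := hbe
        obtain ⟨l, hl⟩ := hie
        have h0 : ¬((i:ℕ) = 0 ∧ (b:ℕ) = 0) := by omega
        have h1 : ¬((i:ℕ) + 1 = (b:ℕ)) := by omega
        have h2 : ¬((b:ℕ) + 1 = (i:ℕ)) := by omega
        simp [Mmat, h0, h1, h2]
      · have : vVec m b = 0 := by
          simp [vVec, hodd, Nat.not_even_iff_odd.mpr hbo]
        rw [this, mul_zero]
  · -- i odd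
    have hi1 : 1 ≤ (i : ℕ) := hio.pos
    have him : (i : ℕ) + 1 < m := by
      have hlt : (i : ℕ) < m := i.isLt
      rcases hodd with ⟨k, hk⟩; rcases hio with ⟨l, hl⟩; omega
    set a : Fin m := ⟨(i : ℕ) - 1, by omega⟩ with ha
    set b : Fin m := ⟨(i : ℕ) + 1, him⟩ with hb
    have hab : a ≠ b := Fin.ne_of_val_ne (by simp only [ha, hb]; omega)
    rw [sum_two _ a b hab]
    · have hMa : Mmat m i a = alph (i : ℕ) := by
        simp only [Mmat, Matrix.of_apply, ha]
        rw [if_neg (by omega), if_neg (by omega), if_pos (by omega)]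
      have hMb : Mmat m i b = - alph ((i : ℕ) + 1) := by
        simp only [Mmat, Matrix.of_apply, hb]
        rw [if_neg (by omega)]; simp
      have hiea : Even ((i:ℕ) - 1) := by
        obtain ⟨l, hl⟩ := hio; exact ⟨l, by omega⟩
      have hieb : Even ((i:ℕ) + 1) := hio.add_one
      have hva : vVec m a = 2 * (2 * ((i : ℝ) - 1) + 1) := by
        simp only [vVec, ha, if_pos hodd, if_pos hiea]
        congr 1
        push_cast [Nat.cast_sub hi1]
        ring
      have hvb : vVec m b = 2 * (2 * ((i : ℝ) + 1) + 1) := by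
        simp only [vVec, hb, if_pos hodd, if_pos hieb]
        push_cast
        ring
      have he0 : e0vec m i = 0 := by
        simp only [e0vec]; rw [if_neg (by omega)]
      rw [hMa, hMb, hva, hvb, he0]
      have hx : (1 : ℝ) ≤ (i : ℝ) := by exact_mod_cast hi1
      have hd1 : (8 * (i : ℝ) ^ 2 - 2) ≠ 0 := by nlinarith
      have hd2 : (8 * ((i : ℝ) + 1) ^ 2 - 2) ≠ 0 := by nlinarith
      simp only [alph]
      push_cast
      field_simp
      ring
    · intro c hca hcb
      have h0 : ¬((i:ℕ) = 0 ∧ (c:ℕ) = 0) := by omega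
      have h1 : ¬((i:ℕ) + 1 = (c:ℕ)) := fun h => hcb (Fin.ext (by simp [hb, ← h]))
      have h2 : ¬((c:ℕ) + 1 = (i:ℕ)) := fun h => hca (Fin.ext (by simp [ha]; omega))
      simp [Mmat, h0, h1, h2]

-- product with N on the right
lemma mulN {m : ℕ} (hz : 0 < m) (A : Matrix (Fin m) (Fin m) ℝ) (i j : Fin m) :
    (A * Nmat m) i j = if (j : ℕ) = 0 then A i ⟨0, hz⟩ else 0 := by
  rw [Matrix.mul_apply]
  rw [Finset.sum_eq_single (⟨0, hz⟩ : Fin m)]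
  · by_cases hj : (j : ℕ) = 0 <;> simp [Nmat, hj]
  · intro b _ hb
    have hbv : (b : ℕ) ≠ 0 := fun h => hb (Fin.ext (by simp [h]))
    simp [Nmat, hbv]
  · simp

/-- if m is odd then −2M⁻¹N + (M⁻¹N)² = 0. -/
theorem G_eq_zero_of_odd (m : ℕ) (hm : 1 ≤ m) (hodd : Odd m) :
    (-2 : ℝ) • ((Mmat m)⁻¹ * Nmat m) + ((Mmat m)⁻¹ * Nmat m) ^ 2 = 0 := by
  by_cases hdet : IsUnit (Mmat m).det
  · have hz : 0 < m := hm
    set z : Fin m := ⟨0, hz⟩ with hzdef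
    set A : Matrix (Fin m) (Fin m) ℝ := (Mmat m)⁻¹ with hA
    have hv : A *ᵥ e0vec m = vVec m := by
      rw [← key m hm hodd, Matrix.mulVec_mulVec, Matrix.nonsing_inv_mul _ hdet,
        Matrix.one_mulVec]
    have hcol : ∀ i : Fin m, A i z = vVec m i := by
      intro i
      have := congrFun hv i
      rw [Matrix.mulVec, dotProduct, Finset.sum_eq_single z] at this
      · simpa [e0vec, hzdef] using this
      · intro b _ hb
        have hbv : (b : ℕ) ≠ 0 := fun h => hb (Fin.ext (by simp [h, hzdef]))
        simp [e0vec, hbv]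
      · simp
    have hzz : A z z = 2 := by
      rw [hcol z]
      norm_num [vVec, hodd]
    ext i j
    rw [pow_two]
    simp only [Matrix.add_apply, Matrix.smul_apply, Matrix.zero_apply, smul_eq_mul]
    have h3 : (A * Nmat m * (A * Nmat m)) i j = ∑ k, (A * Nmat m) i k * (A * Nmat m) k j :=
      Matrix.mul_apply
    have h2 : (∑ k, (A * Nmat m) i k * (A * Nmat m) k j)
        = (if (j : ℕ) = 0 then A i z * A z z else 0) := by
      rw [Finset.sum_eq_single z]
      · rw [mulN hz, mulN hz]
        by_cases hj : (j : ℕ) = 0 <;> simp [hj, hzdef]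
      · intro b _ hb
        have hbv : (b : ℕ) ≠ 0 := fun h => hb (Fin.ext (by simp [h, hzdef]))
        rw [mulN hz]
        simp [hbv]
      · simp
    rw [show ((Mmat m)⁻¹ * Nmat m) = A * Nmat m from rfl, h3, h2, mulN hz]
    by_cases hj : (j : ℕ) = 0 <;> simp [hj, hzz] <;> ring
  · rw [Matrix.nonsing_inv_apply_not_isUnit _ hdet]
    simp
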